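/- Let ξ = (m₁,n₁)+(m₂,n₂) and ζ = (m₁',n₁') + ζ'' be Newton polygons with the same endpoints where ζ ≺ ξ is saturated, m₁' ≤ m₁, n₁' ≤ n₁, and ζ' := ζ'' , ξ' := (m₁ − m₁', n₁ − n₁') + (m₂, n₂) are again Newton polygons with ζ' ≺ ξ'. Then c(ζ, ξ) = c(ζ', ξ') + (n₁·m₁' − m₁·n₁'), where c(·,·) is twice the sum of the differences of the two polygon functions at integer points (equivalently, the area between the polygons). -/

import Mathlib

/-- The slope `n/(m+n)` of a segment `(m,n)`. -/
def NPslope (p : ℕ × ℕ) : ℚ := (p.2 : ℚ) / ((p.1 : ℚ) + (p.2 : ℚ))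

/-- A Newton polygon: a finite (ordered, by decreasing slope) collection of
coprime pairs `(m,n)` of nonnegative integers. -/
structure NewtonPolygon where
  segs : List (ℕ × ℕ)
  coprime : ∀ p ∈ segs, Nat.Coprime p.1 p.2
  sorted : segs.Pairwise (fun p q => NPslope q ≤ NPslope p)

namespace NewtonPolygon

/-- The height `∑ (mᵢ + nᵢ)`. -/
def height (ξ : NewtonPolygon) : ℕ := (ξ.segs.map (fun p => p.1 + p.2)).sum

/-- The dimension `∑ nᵢ`. -/
def dim (ξ : NewtonPolygon) : ℕ := (ξ.segs.map Prod.snd).sum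

/-- The value at the integer point `i` of the line graph given by a list of
segments laid out from left to right. -/
def valAux : List (ℕ × ℕ) → ℕ → ℚ
  | [], _ => 0
  | p :: rest, i =>
      if i ≤ p.1 + p.2 then (p.2 : ℚ) * i / ((p.1 : ℚ) + p.2)
      else (p.2 : ℚ) + valAux rest (i - (p.1 + p.2))

/-- The value of the Newton polygon (as a line graph starting at `(0,0)`, with
segments in increasing slope order from the left) at the integer point `i`. -/
def val (ξ : NewtonPolygon) (i : ℕ) : ℚ := valAux ξ.segs.reverse i

/-- `ζ ≺ ξ` : same endpoints, and `ζ` lies on or above `ξ`. -/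
def Prec (ζ ξ : NewtonPolygon) : Prop :=
  ζ.height = ξ.height ∧ ζ.dim = ξ.dim ∧ ∀ i ≤ ξ.height, ξ.val i ≤ ζ.val i

/-- `c(ζ,ξ) = 2·∑_{i=1}^{h} (ζ(i) − ξ(i))`. -/
def c (ζ ξ : NewtonPolygon) : ℚ :=
  2 * ∑ i ∈ Finset.Icc 1 ξ.height, (ζ.val i - ξ.val i)

/-- `ζ ≺ ξ` is saturated: no Newton polygon lies strictly between them. -/
def Saturated (ζ ξ : NewtonPolygon) : Prop :=
  Prec ζ ξ ∧ ∀ η : NewtonPolygon, Prec ζ η → Prec η ξ →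
    (∀ i, η.val i = ζ.val i) ∨ (∀ i, η.val i = ξ.val i)

end NewtonPolygon


section CInductionAux

open NewtonPolygon

private lemma valAux_zero (l : List (ℕ × ℕ)) : valAux l 0 = 0 := by
  cases l with
  | nil => rfl
  | cons p rest => simp [valAux]

private lemma snd_le_sumH (l : List (ℕ × ℕ)) :
    (l.map Prod.snd).sum ≤ (l.map (fun p => p.1 + p.2)).sum := by
  induction l with
  | nil => simp
  | cons p rest ih => simp only [List.map_cons, List.sum_cons]; omega

private lemma valAux_append_le (l₁ l₂ : List (ℕ × ℕ)) (i : ℕ)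
    (h : i ≤ (l₁.map (fun p => p.1 + p.2)).sum) :
    valAux (l₁ ++ l₂) i = valAux l₁ i := by
  induction l₁ generalizing i with
  | nil =>
    simp only [List.map_nil, List.sum_nil, Nat.le_zero] at h
    subst h
    simp [valAux_zero, valAux]
  | cons p rest ih =>
    simp only [List.map_cons, List.sum_cons] at h
    simp only [List.cons_append, valAux]
    split
    · rfl
    · rw [ih _ (by omega)]

private lemma valAux_append_ge (l₁ l₂ : List (ℕ × ℕ)) (i : ℕ)
    (h : (l₁.map (fun p => p.1 + p.2)).sum ≤ i) :
    valAux (l₁ ++ l₂) i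
      = ((l₁.map Prod.snd).sum : ℚ)
        + valAux l₂ (i - (l₁.map (fun p => p.1 + p.2)).sum) := by
  induction l₁ generalizing i with
  | nil => simp
  | cons p rest ih =>
    simp only [List.map_cons, List.sum_cons] at h ⊢
    simp only [List.cons_append, valAux]
    split
    · rename_i hi
      have h1 : (rest.map (fun p => p.1 + p.2)).sum = 0 := by omega
      have h2 : (rest.map Prod.snd).sum = 0 := by have := snd_le_sumH rest; omega
      have h3 : i = p.1 + p.2 := by omega
      subst h3
      rw [h1, h2]
      rcases Nat.eq_zero_or_pos (p.1 + p.2) with h0 | h0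
      · have hp2 : p.2 = 0 := by omega
        simp [hp2, valAux_zero]
      · have hne : ((p.1 : ℚ) + p.2) ≠ 0 := by
          have : ((p.1 + p.2 : ℕ) : ℚ) ≠ 0 := Nat.cast_ne_zero.mpr (by omega)
          push_cast at this; exact this
        simp only [Nat.add_zero, Nat.sub_self, valAux_zero, add_zero]
        push_cast
        field_simp
    · rename_i hi
      rw [ih _ (by omega)]
      push_cast
      rw [Nat.sub_sub]
      ring

private lemma valAux_cons_le (m n : ℕ) (rest : List (ℕ × ℕ)) (i : ℕ) (h : i ≤ m + n) :
    valAux ((m, n) :: rest) i = (n : ℚ) * i / ((m : ℚ) + n) := by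
  simp [valAux, h]

private lemma valAux_cons_gt (m n : ℕ) (rest : List (ℕ × ℕ)) (i : ℕ) (h : ¬ i ≤ m + n) :
    valAux ((m, n) :: rest) i = (n : ℚ) + valAux rest (i - (m + n)) := by
  simp [valAux, h]

private lemma sum_Ioc_affine (a b : ℕ) (h : a ≤ b) (c₀ c₁ : ℚ) :
    (∑ i ∈ Finset.Ioc a b, (c₀ + c₁ * (i : ℚ))) * 2
      = 2 * ((b : ℚ) - a) * c₀ + c₁ * ((b : ℚ) * (b + 1) - (a : ℚ) * (a + 1)) := by
  induction b, h using Nat.le_induction with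
  | base => simp [Finset.Ioc_self]
  | succ b hb ih =>
    rw [Finset.sum_Ioc_succ_top (by omega)]
    push_cast
    push_cast at ih
    linear_combination ih

end CInductionAux

open NewtonPolygon in
/-- Inductive step: removing the steepest segment `(m₁',n₁')` of `ζ` and
shortening the first segment of `ξ = (m₁,n₁)+(m₂,n₂)` accordingly,
`c(ζ,ξ) = c(ζ',ξ') + (n₁m₁' − m₁n₁')`. -/
theorem c_induction_step (m₁ n₁ m₂ n₂ m₁' n₁' : ℕ)
    (ζ ξ ζ' ξ' : NewtonPolygon)
    (hξ : ξ.segs = [(m₁, n₁), (m₂, n₂)])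
    (hζ : ζ.segs = (m₁', n₁') :: ζ'.segs)
    (hξ' : ξ'.segs = [(m₁ - m₁', n₁ - n₁'), (m₂, n₂)])
    (hm : m₁' ≤ m₁) (hn : n₁' ≤ n₁)
    (hsat : Saturated ζ ξ) (hprec : Prec ζ' ξ') :
    c ζ ξ = c ζ' ξ' + ((n₁ : ℚ) * m₁' - (m₁ : ℚ) * n₁') := by
  obtain ⟨⟨hh1, hd1, -⟩, -⟩ := hsat
  obtain ⟨hh2, hd2, -⟩ := hprec
  have hcopξ' : Nat.Coprime (m₁ - m₁') (n₁ - n₁') := ξ'.coprime (m₁ - m₁', n₁ - n₁') (by rw [hξ']; simp)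
  have hcopζ : Nat.Coprime m₁' n₁' := ζ.coprime (m₁', n₁') (by rw [hζ]; simp)
  have hK1 : 1 ≤ (m₁ - m₁') + (n₁ - n₁') := by
    by_contra h0
    have h1 : m₁ - m₁' = 0 := by omega
    have h2 : n₁ - n₁' = 0 := by omega
    rw [h1, h2] at hcopξ'
    simp [Nat.Coprime] at hcopξ'
  have hk1 : 1 ≤ m₁' + n₁' := by
    by_contra h0
    have h1 : m₁' = 0 := by omega
    have h2 : n₁' = 0 := by omega
    rw [h1, h2] at hcopζ
    simp [Nat.Coprime] at hcopζ
  have hξh : ξ.height = (m₂ + n₂) + (m₁ + n₁) := by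
    simp [NewtonPolygon.height, hξ]; omega
  have hξ'h : ξ'.height = (m₂ + n₂) + ((m₁ - m₁') + (n₁ - n₁')) := by
    simp [NewtonPolygon.height, hξ']; omega
  have hξ'd : ξ'.dim = (n₁ - n₁') + n₂ := by
    simp [NewtonPolygon.dim, hξ']
  set A := m₂ + n₂ with hAdef
  set K := (m₁ - m₁') + (n₁ - n₁') with hKdef
  set k := m₁' + n₁' with hkdef
  have hζ'h : ζ'.height = A + K := by rw [hh2, hξ'h]
  have hζ'd : ζ'.dim = (n₁ - n₁') + n₂ := by rw [hd2, hξ'd]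
  have hζrev : ζ.segs.reverse = ζ'.segs.reverse ++ [(m₁', n₁')] := by rw [hζ]; simp
  have hHrev : ((ζ'.segs.reverse).map (fun p => p.1 + p.2)).sum = A + K := by
    rw [List.map_reverse, List.sum_reverse]; exact hζ'h
  have hDrev : ((ζ'.segs.reverse).map Prod.snd).sum = (n₁ - n₁') + n₂ := by
    rw [List.map_reverse, List.sum_reverse]; exact hζ'd
  have Vζlow : ∀ i ≤ A + K, ζ.val i = ζ'.val i := by
    intro i hi
    rw [NewtonPolygon.val, hζrev, valAux_append_le _ _ _ (by rw [hHrev]; exact hi)]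
    rfl
  have Vζhigh : ∀ i, A + K ≤ i → i ≤ A + K + k →
      ζ.val i = ((n₁ - n₁' : ℕ) : ℚ) + (n₂ : ℚ)
        + (n₁' : ℚ) * ((i - (A + K) : ℕ) : ℚ) / ((m₁' : ℚ) + (n₁' : ℚ)) := by
    intro i h1 h2
    rw [NewtonPolygon.val, hζrev, valAux_append_ge _ _ _ (by rw [hHrev]; exact h1),
      hHrev, hDrev, valAux_cons_le _ _ _ _ (by omega)]
    push_cast
    ring
  have hξrev : ξ.segs.reverse = [(m₂, n₂), (m₁, n₁)] := by rw [hξ]; rfl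
  have hξ'rev : ξ'.segs.reverse = [(m₂, n₂), (m₁ - m₁', n₁ - n₁')] := by rw [hξ']; rfl
  have Vξlow : ∀ i ≤ A, ξ.val i = ξ'.val i := by
    intro i hi
    rw [NewtonPolygon.val, NewtonPolygon.val, hξrev, hξ'rev,
      valAux_cons_le _ _ _ _ hi, valAux_cons_le _ _ _ _ hi]
  have Vξ : ∀ i, A < i → i ≤ A + (m₁ + n₁) →
      ξ.val i = (n₂ : ℚ) + (n₁ : ℚ) * ((i - A : ℕ) : ℚ) / ((m₁ : ℚ) + n₁) := by
    intro i h1 h2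
    rw [NewtonPolygon.val, hξrev, valAux_cons_gt _ _ _ _ (by omega),
      valAux_cons_le _ _ _ _ (by omega)]
  have Vξ' : ∀ i, A < i → i ≤ A + K →
      ξ'.val i = (n₂ : ℚ) + ((n₁ - n₁' : ℕ) : ℚ) * ((i - A : ℕ) : ℚ)
        / (((m₁ - m₁' : ℕ) : ℚ) + ((n₁ - n₁' : ℕ) : ℚ)) := by
    intro i h1 h2
    rw [NewtonPolygon.val, hξ'rev, valAux_cons_gt _ _ _ _ (by omega),
      valAux_cons_le _ _ _ _ (by omega)]
  -- nonzero denominators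
  have hNq0 : (m₁ : ℚ) + n₁ ≠ 0 := by
    have : ((m₁ + n₁ : ℕ) : ℚ) ≠ 0 := Nat.cast_ne_zero.mpr (by omega)
    push_cast at this; exact this
  have hKq0 : ((m₁ - m₁' : ℕ) : ℚ) + ((n₁ - n₁' : ℕ) : ℚ) ≠ 0 := by
    have : (((m₁ - m₁') + (n₁ - n₁') : ℕ) : ℚ) ≠ 0 := Nat.cast_ne_zero.mpr (by omega)
    push_cast at this; exact this
  have hkq0 : (m₁' : ℚ) + n₁' ≠ 0 := by
    have : ((m₁' + n₁' : ℕ) : ℚ) ≠ 0 := Nat.cast_ne_zero.mpr (by omega)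
    push_cast at this; exact this
  -- index sets
  have hIccξ : Finset.Icc 1 ξ.height = Finset.Ioc 0 (A + K + k) := by
    rw [hξh, show A + (m₁ + n₁) = A + K + k by omega]
    exact Finset.Icc_add_one_left_eq_Ioc 0 _
  have hIccξ' : Finset.Icc 1 ξ'.height = Finset.Ioc 0 (A + K) := by
    rw [hξ'h]; exact Finset.Icc_add_one_left_eq_Ioc 0 _
  have hsplit : ∑ i ∈ Finset.Ioc 0 (A + K + k), (ζ.val i - ξ.val i)
      = (∑ i ∈ Finset.Ioc 0 (A + K), (ζ.val i - ξ.val i))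
        + ∑ i ∈ Finset.Ioc (A + K) (A + K + k), (ζ.val i - ξ.val i) :=
    (Finset.sum_Ioc_consecutive _ (by omega) (by omega)).symm
  have hfirst : ∑ i ∈ Finset.Ioc 0 (A + K), (ζ.val i - ξ.val i)
      = (∑ i ∈ Finset.Ioc 0 (A + K), (ζ'.val i - ξ'.val i))
        + ∑ i ∈ Finset.Ioc 0 (A + K), (ξ'.val i - ξ.val i) := by
    rw [← Finset.sum_add_distrib]
    refine Finset.sum_congr rfl fun i hi => ?_
    rw [Vζlow i (Finset.mem_Ioc.mp hi).2]
    ring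
  have hT1split : ∑ i ∈ Finset.Ioc 0 (A + K), (ξ'.val i - ξ.val i)
      = ∑ i ∈ Finset.Ioc A (A + K), (ξ'.val i - ξ.val i) := by
    rw [← Finset.sum_Ioc_consecutive _ (Nat.zero_le A) (by omega : A ≤ A + K)]
    have hz : ∑ i ∈ Finset.Ioc 0 A, (ξ'.val i - ξ.val i) = 0 := by
      refine Finset.sum_eq_zero fun i hi => ?_
      rw [Vξlow i (Finset.mem_Ioc.mp hi).2]
      ring
    rw [hz, zero_add]
  set C1 : ℚ := ((n₁ - n₁' : ℕ) : ℚ) / (((m₁ - m₁' : ℕ) : ℚ) + ((n₁ - n₁' : ℕ) : ℚ))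
      - (n₁ : ℚ) / ((m₁ : ℚ) + n₁) with hC1
  have hT1fun : ∀ i ∈ Finset.Ioc A (A + K), ξ'.val i - ξ.val i = -(A : ℚ) * C1 + C1 * i := by
    intro i hi
    obtain ⟨h1, h2⟩ := Finset.mem_Ioc.mp hi
    rw [Vξ' i h1 h2, Vξ i h1 (by omega), Nat.cast_sub h1.le, hC1]
    ring
  have hT1 := sum_Ioc_affine A (A + K) (by omega) (-(A : ℚ) * C1) C1
  rw [← Finset.sum_congr rfl hT1fun] at hT1
  set C2 : ℚ := (n₁' : ℚ) / ((m₁' : ℚ) + n₁') - (n₁ : ℚ) / ((m₁ : ℚ) + n₁) with hC2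
  set D2 : ℚ := ((n₁ - n₁' : ℕ) : ℚ) + (n₂ : ℚ) - (n₂ : ℚ)
      - ((A : ℚ) + (K : ℚ)) * (n₁' : ℚ) / ((m₁' : ℚ) + n₁')
      + (A : ℚ) * (n₁ : ℚ) / ((m₁ : ℚ) + n₁) with hD2
  have hS2fun : ∀ i ∈ Finset.Ioc (A + K) (A + K + k), ζ.val i - ξ.val i = D2 + C2 * i := by
    intro i hi
    obtain ⟨h1, h2⟩ := Finset.mem_Ioc.mp hi
    rw [Vζhigh i h1.le h2, Vξ i (by omega) (by omega),
      Nat.cast_sub h1.le, Nat.cast_sub (by omega : A ≤ i), hC2, hD2]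
    push_cast
    ring
  have hS2 := sum_Ioc_affine (A + K) (A + K + k) (by omega) D2 C2
  rw [← Finset.sum_congr rfl hS2fun] at hS2
  have key : c ζ ξ = c ζ' ξ'
      + ((∑ i ∈ Finset.Ioc A (A + K), (ξ'.val i - ξ.val i)) * 2
         + (∑ i ∈ Finset.Ioc (A + K) (A + K + k), (ζ.val i - ξ.val i)) * 2) := by
    rw [NewtonPolygon.c, NewtonPolygon.c, hIccξ, hIccξ', hsplit, hfirst, hT1split]
    ring
  rw [key, hT1, hS2, hC1, hC2, hD2, hAdef, hKdef, hkdef]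
  have hKq0' : ((m₁ : ℚ) - m₁') + ((n₁ : ℚ) - n₁') ≠ 0 := by
    intro h0
    apply hKq0
    rw [Nat.cast_sub hm, Nat.cast_sub hn]
    exact h0
  push_cast [Nat.cast_sub hm, Nat.cast_sub hn]
  field_simp
  ring
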